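/- arXiv:quant-ph/0406237 — 4 statements merged into one kernel-verified Lean document; each statement's English description precedes it below -/
import Mathlib

section
/- Let Ξ be a positive semidefinite operator on a finite-dimensional complex Hilbert space H, and let Θ be a Hermitian operator on H. Then the following are equivalent: (1) there exists ε > 0 such that Ξ + tΘ ≥ 0 for all t ∈ [−ε, ε]; (2) the support (range) of Θ is contained in the support of Ξ. -/
open scoped ComplexOrder Matrix

namespace ExtremalPovmAux

local notation "⟪" x ", " y "⟫" => @inner ℂ _ _ x y

variable {n : ℕ}

lemma sym_range_eq_orthogonal_ker (T : EuclideanSpace ℂ (Fin n) →ₗ[ℂ] EuclideanSpace ℂ (Fin n))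
    (hT : T.IsSymmetric) : LinearMap.range T = (LinearMap.ker T)ᗮ := by
  apply Submodule.eq_of_le_of_finrank_eq
  · rintro _ ⟨x, rfl⟩
    rw [Submodule.mem_orthogonal]
    intro u hu
    rw [← hT u x, LinearMap.mem_ker.mp hu, inner_zero_left]
  · have h1 := LinearMap.finrank_range_add_finrank_ker T
    have h2 := Submodule.finrank_add_finrank_orthogonal (LinearMap.ker T)
    omega

lemma range_transfer (M N : Matrix (Fin n) (Fin n) ℂ)
    (h : LinearMap.range (Matrix.toEuclideanLin M) ≤ LinearMap.range (Matrix.toEuclideanLin N)) :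
    LinearMap.range (Matrix.toLin' M) ≤ LinearMap.range (Matrix.toLin' N) := by
  rintro _ ⟨x, rfl⟩
  obtain ⟨y, hy⟩ := h ⟨(WithLp.equiv 2 _).symm x, rfl⟩
  exact ⟨WithLp.equiv 2 _ y, congrArg (WithLp.equiv 2 _) hy⟩

lemma range_transfer' (M N : Matrix (Fin n) (Fin n) ℂ)
    (h : LinearMap.range (Matrix.toLin' M) ≤ LinearMap.range (Matrix.toLin' N)) :
    LinearMap.range (Matrix.toEuclideanLin M) ≤ LinearMap.range (Matrix.toEuclideanLin N) := by
  rintro _ ⟨x, rfl⟩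
  obtain ⟨y, hy⟩ := h ⟨WithLp.equiv 2 _ x, rfl⟩
  exact ⟨(WithLp.equiv 2 _).symm y, congrArg (WithLp.equiv 2 _).symm hy⟩

lemma herm_form_real {M : Matrix (Fin n) (Fin n) ℂ} (hM : M.IsHermitian) (x : Fin n → ℂ) :
    (star x ⬝ᵥ M *ᵥ x).im = 0 := by
  have : (starRingEnd ℂ) (star x ⬝ᵥ M *ᵥ x) = star x ⬝ᵥ M *ᵥ x := by
    calc (starRingEnd ℂ) (star x ⬝ᵥ M *ᵥ x) = star (star x ⬝ᵥ M *ᵥ x) := rfl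
    _ = star (M *ᵥ x) ⬝ᵥ x := (Matrix.star_dotProduct _ _).symm
    _ = (star x ᵥ* Mᴴ) ⬝ᵥ x := by rw [Matrix.star_mulVec]
    _ = star x ⬝ᵥ (Mᴴ *ᵥ x) := by rw [← Matrix.dotProduct_mulVec]
    _ = star x ⬝ᵥ M *ᵥ x := by rw [hM.eq]
  exact Complex.conj_eq_iff_im.mp this

lemma ker_incl (Ξ Θ : Matrix (Fin n) (Fin n) ℂ)
    (h : ∃ ε : ℝ, 0 < ε ∧ ∀ t : ℝ, t ∈ Set.Icc (-ε) ε → (Ξ + t • Θ).PosSemidef)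
    (x : Fin n → ℂ) (hx : Ξ *ᵥ x = 0) : Θ *ᵥ x = 0 := by
  obtain ⟨ε, hε, h⟩ := h
  have h1 := h ε ⟨by linarith, le_refl ε⟩
  have h2 := h (-ε) ⟨le_refl _, by linarith⟩
  have key : ∀ t : ℝ, (Ξ + t • Θ) *ᵥ x = t • (Θ *ᵥ x) := by
    intro t
    rw [Matrix.add_mulVec, hx, Matrix.smul_mulVec, zero_add]
  have e1 : (0:ℂ) ≤ star x ⬝ᵥ (Ξ + ε • Θ) *ᵥ x := h1.dotProduct_mulVec_nonneg x
  have e2 : (0:ℂ) ≤ star x ⬝ᵥ (Ξ + (-ε) • Θ) *ᵥ x := h2.dotProduct_mulVec_nonneg x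
  rw [key, dotProduct_smul] at e1 e2
  have hc : ε • (star x ⬝ᵥ Θ *ᵥ x) = 0 := by
    have : (-ε) • (star x ⬝ᵥ Θ *ᵥ x) = -(ε • (star x ⬝ᵥ Θ *ᵥ x)) := by
      rw [neg_smul]
    rw [this] at e2
    exact le_antisymm (neg_nonneg.mp e2) e1
  have hform : star x ⬝ᵥ (Ξ + ε • Θ) *ᵥ x = 0 := by
    rw [key, dotProduct_smul, hc]
  have := (h1.dotProduct_mulVec_zero_iff x).mp hform
  rw [key] at this
  exact (smul_eq_zero.mp this).resolve_left (ne_of_gt hε)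

lemma coercive_on_orthogonal_ker (A : EuclideanSpace ℂ (Fin n) →ₗ[ℂ] EuclideanSpace ℂ (Fin n))
    (hpos : ∀ v, 0 ≤ Complex.re ⟪v, A v⟫)
    (hker : ∀ v, Complex.re ⟪v, A v⟫ = 0 → A v = 0) :
    ∃ lam : ℝ, 0 < lam ∧ ∀ a ∈ (LinearMap.ker A)ᗮ, lam * ‖a‖ ^ 2 ≤ Complex.re ⟪a, A a⟫ := by
  set K := LinearMap.ker A with hK
  by_cases hbot : Kᗮ = ⊥
  · refine ⟨1, one_pos, fun a ha => ?_⟩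
    rw [hbot, Submodule.mem_bot] at ha
    simp [ha]
  · obtain ⟨v, hvK, hv0⟩ := Submodule.exists_mem_ne_zero_of_ne_bot hbot
    have hAcont : Continuous A := A.continuous_of_finiteDimensional
    set g : ↥Kᗮ → ℝ := fun a => Complex.re ⟪(a : EuclideanSpace ℂ (Fin n)), A a⟫ with hg
    have hgc : Continuous g := by
      apply Complex.continuous_re.comp
      exact Continuous.inner continuous_subtype_val (hAcont.comp continuous_subtype_val)
    have hsphere : (Metric.sphere (0 : ↥Kᗮ) 1).Nonempty := by
      refine ⟨⟨(‖v‖⁻¹ : ℝ) • v, Submodule.smul_of_tower_mem _ _ hvK⟩, ?_⟩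
      have hv : ‖v‖ ≠ 0 := norm_ne_zero_iff.mpr hv0
      simp [Submodule.coe_norm, norm_smul, inv_mul_cancel₀ hv]
    obtain ⟨a₀, ha₀mem, ha₀min⟩ :=
      (isCompact_sphere (0 : ↥Kᗮ) 1).exists_isMinOn hsphere hgc.continuousOn
    have ha₀norm : ‖(a₀ : EuclideanSpace ℂ (Fin n))‖ = 1 := by
      simpa [Submodule.coe_norm] using mem_sphere_zero_iff_norm.mp ha₀mem
    refine ⟨g a₀, ?_, ?_⟩
    · rcases lt_or_eq_of_le (hpos a₀) with h | h
      · exact h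
      · exfalso
        have hA0 : A a₀ = 0 := hker _ h.symm
        have hmemK : (a₀ : EuclideanSpace ℂ (Fin n)) ∈ K := LinearMap.mem_ker.mpr hA0
        have : (a₀ : EuclideanSpace ℂ (Fin n)) = 0 :=
          inner_self_eq_zero.mp ((Submodule.mem_orthogonal K _).mp a₀.2 _ hmemK)
        rw [this] at ha₀norm
        simp at ha₀norm
    · intro a ha
      rcases eq_or_ne a 0 with rfl | ha0
      · simp
      · have hna : ‖a‖ ≠ 0 := norm_ne_zero_iff.mpr ha0
        set r : ℝ := ‖a‖⁻¹ with hr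
        have hmem : ((r : ℂ) • a) ∈ Kᗮ := Submodule.smul_mem _ _ ha
        have hsph : (⟨(r:ℂ) • a, hmem⟩ : ↥Kᗮ) ∈ Metric.sphere (0 : ↥Kᗮ) 1 := by
          rw [mem_sphere_zero_iff_norm]
          have h' : ‖(⟨(r:ℂ) • a, hmem⟩ : ↥Kᗮ)‖ = ‖(r:ℂ) • a‖ := rfl
          rw [h', norm_smul]
          simp [hr, inv_mul_cancel₀ hna]
        have hle : g a₀ ≤ g ⟨(r:ℂ) • a, hmem⟩ := ha₀min hsph
        have hgval : g ⟨(r:ℂ) • a, hmem⟩ = r ^ 2 * Complex.re ⟪a, A a⟫ := by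
          simp only [hg]
          have h' : A ((r:ℂ) • a) = (r:ℂ) • A a := map_smul A _ _
          rw [h', inner_smul_left, inner_smul_right]
          simp [Complex.ofReal_pow]
          ring
        rw [hgval] at hle
        have h2 : g a₀ * ‖a‖ ^ 2 ≤ r ^ 2 * Complex.re ⟪a, A a⟫ * ‖a‖ ^ 2 := by
          nlinarith [sq_nonneg ‖a‖, hle]
        calc g a₀ * ‖a‖ ^ 2 ≤ r ^ 2 * Complex.re ⟪a, A a⟫ * ‖a‖ ^ 2 := h2
          _ = Complex.re ⟪a, A a⟫ := by
            rw [hr]; field_simp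

end ExtremalPovmAux

set_option maxHeartbeats 1000000 in
open ExtremalPovmAux in
/-- Lemma 1 (PosAndSupp): for `Ξ` positive semidefinite and `Θ` Hermitian on a
finite-dimensional complex Hilbert space, `Ξ + tΘ ≥ 0` for all `t` in some interval
`[-ε, ε]` with `ε > 0` iff the support of `Θ` is contained in the support of `Ξ`. -/
theorem extremal_povm_stmt0 {n : ℕ} (Ξ Θ : Matrix (Fin n) (Fin n) ℂ)
    (hΞ : Ξ.PosSemidef) (hΘ : Θ.IsHermitian) :
    (∃ ε : ℝ, 0 < ε ∧ ∀ t : ℝ, t ∈ Set.Icc (-ε) ε → (Ξ + t • Θ).PosSemidef) ↔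
      LinearMap.range (Matrix.toLin' Θ) ≤ LinearMap.range (Matrix.toLin' Ξ) := by
  have hA_sym : (Matrix.toEuclideanLin Ξ).IsSymmetric :=
    Matrix.isHermitian_iff_isSymmetric.mp hΞ.1
  have hB_sym : (Matrix.toEuclideanLin Θ).IsSymmetric :=
    Matrix.isHermitian_iff_isSymmetric.mp hΘ
  set A := Matrix.toEuclideanLin Ξ with hA
  set B := Matrix.toEuclideanLin Θ with hB
  -- basic translation: inner products are dot products
  have hinnerA : ∀ v : EuclideanSpace ℂ (Fin n),
      (inner ℂ v (A v) : ℂ) = star (WithLp.equiv 2 _ v) ⬝ᵥ Ξ *ᵥ (WithLp.equiv 2 _ v) := fun v => by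
        rw [EuclideanSpace.inner_eq_star_dotProduct, dotProduct_comm]; rfl
  have hinnerB : ∀ v : EuclideanSpace ℂ (Fin n),
      (inner ℂ v (B v) : ℂ) = star (WithLp.equiv 2 _ v) ⬝ᵥ Θ *ᵥ (WithLp.equiv 2 _ v) := fun v => by
        rw [EuclideanSpace.inner_eq_star_dotProduct, dotProduct_comm]; rfl
  constructor
  · intro h
    -- kernel inclusion at the Euclidean level
    have hkerAB : LinearMap.ker A ≤ LinearMap.ker B := by
      intro v hv
      rw [LinearMap.mem_ker] at hv ⊢
      have hx : Ξ *ᵥ (WithLp.equiv 2 _ v) = 0 := congrArg (WithLp.equiv 2 _) hv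
      have := ker_incl Ξ Θ h _ hx
      exact congrArg (WithLp.equiv 2 _).symm this
    apply range_transfer
    rw [sym_range_eq_orthogonal_ker A hA_sym, sym_range_eq_orthogonal_ker B hB_sym]
    exact Submodule.orthogonal_le hkerAB
  · intro hr
    have hrE : LinearMap.range B ≤ LinearMap.range A := range_transfer' Θ Ξ hr
    -- kernel inclusion
    have hkerAB : LinearMap.ker A ≤ LinearMap.ker B := by
      intro v hv
      rw [LinearMap.mem_ker] at hv ⊢
      have key : ∀ y, (inner ℂ y (B v) : ℂ) = 0 := by
        intro y
        obtain ⟨z, hz⟩ := hrE ⟨y, rfl⟩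
        rw [← hB_sym y v, ← hz, hA_sym z v, hv, inner_zero_right]
      have := key (B v)
      exact inner_self_eq_zero.mp this
    -- coercivity of A on the orthogonal complement of its kernel
    have hpos : ∀ v, 0 ≤ Complex.re (inner ℂ v (A v) : ℂ) := by
      intro v
      rw [hinnerA]
      exact hΞ.re_dotProduct_nonneg _
    have hker0 : ∀ v, Complex.re (inner ℂ v (A v) : ℂ) = 0 → A v = 0 := by
      intro v hv
      have him := herm_form_real hΞ.1 (WithLp.equiv 2 _ v)
      have hz : star (WithLp.equiv 2 _ v) ⬝ᵥ Ξ *ᵥ (WithLp.equiv 2 _ v) = 0 := by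
        rw [hinnerA] at hv
        exact Complex.ext hv him
      have := (hΞ.dotProduct_mulVec_zero_iff _).mp hz
      exact congrArg (WithLp.equiv 2 _).symm this
    obtain ⟨lam, hlam, hco⟩ := coercive_on_orthogonal_ker A hpos hker0
    set Bclm := LinearMap.toContinuousLinearMap B with hBclm
    set C := ‖Bclm‖ with hC
    have hC0 : (0:ℝ) ≤ C := norm_nonneg _
    refine ⟨lam / (C + 1), by positivity, ?_⟩
    intro t ht
    have htabs : |t| ≤ lam / (C + 1) := abs_le.mpr ⟨ht.1, ht.2⟩
    -- the quadratic form estimate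
    have hform : ∀ v : EuclideanSpace ℂ (Fin n),
        0 ≤ Complex.re (inner ℂ v (A v) : ℂ) + t * Complex.re (inner ℂ v (B v) : ℂ) := by
      intro v
      set K := LinearMap.ker A with hK
      have : CompleteSpace K := FiniteDimensional.complete ℂ K
      set b : EuclideanSpace ℂ (Fin n) := (K.orthogonalProjectionOnto v : EuclideanSpace ℂ (Fin n))
        with hb
      set a : EuclideanSpace ℂ (Fin n) := v - b with ha
      have hbK : b ∈ K := Submodule.coe_mem _
      have haK : a ∈ Kᗮ := Submodule.sub_starProjection_mem_orthogonal v
      have hvab : v = a + b := by rw [ha]; abel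
      have hAb : A b = 0 := LinearMap.mem_ker.mp hbK
      have hBb : B b = 0 := LinearMap.mem_ker.mp (hkerAB hbK)
      have hformA : (inner ℂ v (A v) : ℂ) = inner ℂ a (A a) := by
        conv_lhs => rw [hvab]
        rw [map_add, hAb, add_zero, inner_add_left, ← hA_sym b a, hAb, inner_zero_left, add_zero]
      have hformB : (inner ℂ v (B v) : ℂ) = inner ℂ a (B a) := by
        conv_lhs => rw [hvab]
        rw [map_add, hBb, add_zero, inner_add_left, ← hB_sym b a, hBb, inner_zero_left, add_zero]
      rw [hformA, hformB]
      have hcoa := hco a haK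
      have hBa : ‖B a‖ ≤ C * ‖a‖ := Bclm.le_opNorm a
      have habs : |Complex.re (inner ℂ a (B a) : ℂ)| ≤ C * ‖a‖ ^ 2 := by
        have h1 : |Complex.re (inner ℂ a (B a) : ℂ)| ≤ ‖(inner ℂ a (B a) : ℂ)‖ := by
          exact Complex.abs_re_le_norm _
        have h2 : ‖(inner ℂ a (B a) : ℂ)‖ ≤ ‖a‖ * ‖B a‖ := norm_inner_le_norm a (B a)
        calc |Complex.re (inner ℂ a (B a) : ℂ)| ≤ ‖a‖ * ‖B a‖ := h1.trans h2
          _ ≤ ‖a‖ * (C * ‖a‖) := by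
              apply mul_le_mul_of_nonneg_left hBa (norm_nonneg a)
          _ = C * ‖a‖ ^ 2 := by ring
      have hεC : (lam / (C + 1)) * C ≤ lam := by
        rw [div_mul_eq_mul_div, div_le_iff₀ (by positivity)]
        nlinarith
      have htB : |t * Complex.re (inner ℂ a (B a) : ℂ)| ≤ (lam / (C + 1)) * (C * ‖a‖ ^ 2) := by
        rw [abs_mul]
        exact mul_le_mul htabs habs (abs_nonneg _) (by positivity)
      have hneg := neg_abs_le (t * Complex.re (inner ℂ a (B a) : ℂ))
      nlinarith [mul_le_mul_of_nonneg_right hεC (sq_nonneg ‖a‖), sq_nonneg ‖a‖]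
    -- conclude PosSemidef
    have hsmulH : (t • Θ).IsHermitian := by
      show (t • Θ)ᴴ = t • Θ
      rw [Matrix.conjTranspose_smul, hΘ.eq, star_trivial]
    refine Matrix.PosSemidef.of_dotProduct_mulVec_nonneg ?_ ?_
    · exact hΞ.1.add hsmulH
    · intro x
      have hform' : 0 ≤ (star x ⬝ᵥ Ξ *ᵥ x).re + t * (star x ⬝ᵥ Θ *ᵥ x).re := by
        have h := hform ((WithLp.equiv 2 (Fin n → ℂ)).symm x)
        rw [hinnerA, hinnerB] at h
        exact h
      have hsplit : star x ⬝ᵥ (Ξ + t • Θ) *ᵥ x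
          = star x ⬝ᵥ Ξ *ᵥ x + (t : ℂ) * (star x ⬝ᵥ Θ *ᵥ x) := by
        rw [Matrix.add_mulVec, dotProduct_add, Matrix.smul_mulVec,
          dotProduct_smul, Complex.real_smul]
      have him : (star x ⬝ᵥ (Ξ + t • Θ) *ᵥ x).im = 0 :=
        herm_form_real (hΞ.1.add hsmulH) x
      rw [Complex.le_def]
      refine ⟨?_, by rw [Complex.zero_im, him]⟩
      rw [Complex.zero_re, hsplit, Complex.add_re, Complex.re_ofReal_mul]
      exact hform'
end

section
/- Let C be a convex set of self-adjoint operators on a finite-dimensional Hilbert space, defined as the intersection of the cone of positive semidefinite operators with finitely many affine constraints of the form Tr[T_k Ξ] = c_k and commutation constraints [Ξ, U] = 0 for U in a fixed set of unitaries. Then Ξ ∈ C is an extreme point of C if and only if every ζ ∈ C with support(ζ) ⊆ support(Ξ) satisfies ζ = Ξ. -/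
open scoped ComplexOrder Matrix

namespace ExtremalAux

open Matrix

variable {n : ℕ}

lemma real_smul_matrix (a : ℝ) (M : Matrix (Fin n) (Fin n) ℂ) :
    a • M = (a : ℂ) • M := by
  ext i j; simp [Complex.real_smul]

lemma dot_star_self (v : Fin n → ℂ) :
    star v ⬝ᵥ v = ((∑ i, ‖v i‖^2 : ℝ) : ℂ) := by
  simp only [dotProduct, Pi.star_apply, Complex.star_def,
    ← Complex.normSq_eq_conj_mul_self, Complex.normSq_eq_norm_sq]
  push_cast
  norm_num

lemma dot_sq (B : Matrix (Fin n) (Fin n) ℂ) (hB : B.IsHermitian) (x : Fin n → ℂ) :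
    star x ⬝ᵥ (B * B) *ᵥ x = star (B *ᵥ x) ⬝ᵥ (B *ᵥ x) := by
  rw [← Matrix.mulVec_mulVec, Matrix.dotProduct_mulVec, Matrix.star_mulVec, hB.eq]

open scoped MatrixOrder in
noncomputable def _root_.Matrix.PosSemidef.sqrt {X : Matrix (Fin n) (Fin n) ℂ} (_hX : X.PosSemidef) :
    Matrix (Fin n) (Fin n) ℂ := CFC.sqrt X

open scoped MatrixOrder in
lemma _root_.Matrix.PosSemidef.posSemidef_sqrt {X : Matrix (Fin n) (Fin n) ℂ} (hX : X.PosSemidef) :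
    hX.sqrt.PosSemidef := (CFC.sqrt_nonneg X).posSemidef

open scoped MatrixOrder in
lemma _root_.Matrix.PosSemidef.sqrt_mul_self {X : Matrix (Fin n) (Fin n) ℂ} (hX : X.PosSemidef) :
    hX.sqrt * hX.sqrt = X := CFC.sqrt_mul_sqrt_self X hX.nonneg

lemma sqrt_kernel {X : Matrix (Fin n) (Fin n) ℂ} (hX : X.PosSemidef) (x : Fin n → ℂ) :
    X *ᵥ x = 0 ↔ hX.sqrt *ᵥ x = 0 := by
  constructor
  · intro h
    have h0 : star x ⬝ᵥ X *ᵥ x = 0 := by rw [h, dotProduct_zero]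
    rw [← hX.sqrt_mul_self, dot_sq _ hX.posSemidef_sqrt.1] at h0
    exact dotProduct_star_self_eq_zero.1 h0
  · intro h
    rw [← hX.sqrt_mul_self, ← Matrix.mulVec_mulVec, h, Matrix.mulVec_zero]

lemma range_le_of_ker_le {A Z : Matrix (Fin n) (Fin n) ℂ}
    (hA : A.IsHermitian) (hZ : Z.IsHermitian)
    (h : ∀ x, A *ᵥ x = 0 → Z *ᵥ x = 0) :
    LinearMap.range (Matrix.toLin' Z) ≤ LinearMap.range (Matrix.toLin' A) := by
  set f := Matrix.toLin' A with hf
  have hdotA : ∀ v w : Fin n → ℂ, star v ⬝ᵥ (A *ᵥ w) = star (A *ᵥ v) ⬝ᵥ w := by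
    intro v w
    rw [Matrix.dotProduct_mulVec, Matrix.star_mulVec, hA.eq]
  have hdisj : LinearMap.range f ⊓ LinearMap.ker f = ⊥ := by
    rw [Submodule.eq_bot_iff]
    rintro v ⟨⟨w, rfl⟩, hv2⟩
    have hv2' : A *ᵥ (f w) = 0 := by
      simpa [f, Matrix.toLin'_apply] using hv2
    have : star (f w) ⬝ᵥ (f w) = 0 := by
      have : star (f w) ⬝ᵥ (A *ᵥ w) = star (A *ᵥ f w) ⬝ᵥ w := hdotA _ _
      rw [hv2'] at this
      simpa [f, Matrix.toLin'_apply] using this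
    exact dotProduct_star_self_eq_zero.1 this
  have htop : LinearMap.range f ⊔ LinearMap.ker f = ⊤ := by
    apply Submodule.eq_top_of_finrank_eq
    have h1 := Submodule.finrank_sup_add_finrank_inf_eq (LinearMap.range f) (LinearMap.ker f)
    have h2 := LinearMap.finrank_range_add_finrank_ker f
    rw [hdisj] at h1
    simp only [finrank_bot, add_zero] at h1
    omega
  rintro v ⟨y, rfl⟩
  have hv : Matrix.toLin' Z y ∈ LinearMap.range f ⊔ LinearMap.ker f := htop ▸ Submodule.mem_top
  obtain ⟨u, hu, w, hw, huw⟩ := Submodule.mem_sup.1 hv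
  have hAw : A *ᵥ w = 0 := by simpa [f, Matrix.toLin'_apply] using hw
  have hZw : Z *ᵥ w = 0 := h w hAw
  have hw0 : w = 0 := by
    have e1 : star w ⬝ᵥ (Matrix.toLin' Z y) = 0 := by
      rw [Matrix.toLin'_apply, Matrix.dotProduct_mulVec, ← hZ.eq, ← Matrix.star_mulVec, hZw]
      simp
    obtain ⟨u', rfl⟩ := hu
    have e2 : star w ⬝ᵥ (f u') = 0 := by
      have := hdotA w u'
      rw [hAw] at this
      simpa [f, Matrix.toLin'_apply] using this
    rw [← huw, dotProduct_add, e2, zero_add] at e1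
    exact dotProduct_star_self_eq_zero.1 e1
  rw [hw0, add_zero] at huw
  exact huw ▸ hu

lemma exists_comp {f g : (Fin n → ℂ) →ₗ[ℂ] (Fin n → ℂ)}
    (h : LinearMap.ker f ≤ LinearMap.ker g) :
    ∃ D : (Fin n → ℂ) →ₗ[ℂ] (Fin n → ℂ), ∀ x, D (f x) = g x := by
  obtain ⟨q, hq⟩ := Submodule.exists_isCompl (LinearMap.range f)
  refine ⟨(Submodule.liftQ (LinearMap.ker f) g h).comp
    ((f.quotKerEquivRange.symm : LinearMap.range f →ₗ[ℂ] _).comp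
      (Submodule.linearProjOfIsCompl _ q hq)), fun x => ?_⟩
  simp only [LinearMap.comp_apply]
  have h1 : Submodule.linearProjOfIsCompl _ q hq (f x)
      = ⟨f x, LinearMap.mem_range_self f x⟩ :=
    Submodule.linearProjOfIsCompl_apply_left hq ⟨f x, LinearMap.mem_range_self f x⟩
  rw [h1]
  have h2 := f.quotKerEquivRange_symm_apply_image x (LinearMap.mem_range_self f x)
  rw [LinearEquiv.coe_coe, h2]
  simp [Submodule.mkQ_apply]

lemma opnorm_bound (D : (Fin n → ℂ) →ₗ[ℂ] (Fin n → ℂ)) :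
    ∃ t : ℝ, 0 ≤ t ∧ ∀ z, star (D z) ⬝ᵥ (D z) ≤ (t : ℂ) * (star z ⬝ᵥ z) := by
  set e := WithLp.linearEquiv 2 ℂ (Fin n → ℂ) with he
  set D' : EuclideanSpace ℂ (Fin n) →ₗ[ℂ] EuclideanSpace ℂ (Fin n) :=
    (e.symm : (Fin n → ℂ) →ₗ[ℂ] _) ∘ₗ D ∘ₗ (e : _ →ₗ[ℂ] (Fin n → ℂ)) with hD'
  set Dc := LinearMap.toContinuousLinearMap D' with hDc
  refine ⟨‖Dc‖^2, by positivity, fun z => ?_⟩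
  have hnorm : ∀ v : Fin n → ℂ,
      star v ⬝ᵥ v = ((‖(e.symm v : EuclideanSpace ℂ (Fin n))‖^2 : ℝ) : ℂ) := by
    intro v
    rw [dot_star_self]
    congr 1
    rw [PiLp.norm_sq_eq_of_L2]
    rfl
  rw [hnorm, hnorm]
  rw [← Complex.ofReal_mul, Complex.real_le_real]
  have key : (e.symm (D z) : EuclideanSpace ℂ (Fin n)) = Dc (e.symm z) := by
    simp [Dc, D']
  rw [key]
  calc ‖Dc (e.symm z)‖^2 ≤ (‖Dc‖ * ‖(e.symm z : EuclideanSpace ℂ (Fin n))‖)^2 := by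
        have := Dc.le_opNorm (e.symm z)
        exact pow_le_pow_left₀ (norm_nonneg _) this 2
    _ = ‖Dc‖^2 * ‖(e.symm z : EuclideanSpace ℂ (Fin n))‖^2 := by ring

lemma exists_dominate {Z X : Matrix (Fin n) (Fin n) ℂ} (hZ : Z.PosSemidef) (hX : X.PosSemidef)
    (h : ∀ x, X *ᵥ x = 0 → Z *ᵥ x = 0) :
    ∃ t : ℝ, 1 ≤ t ∧ ∀ x, star x ⬝ᵥ Z *ᵥ x ≤ (t : ℂ) * (star x ⬝ᵥ X *ᵥ x) := by
  have hker : LinearMap.ker (Matrix.toLin' hX.sqrt) ≤ LinearMap.ker (Matrix.toLin' hZ.sqrt) := by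
    intro x hx
    rw [LinearMap.mem_ker, Matrix.toLin'_apply] at hx ⊢
    rw [← sqrt_kernel hZ]
    exact h x ((sqrt_kernel hX x).2 hx)
  obtain ⟨D, hD⟩ := exists_comp hker
  obtain ⟨t₀, ht₀, hDb⟩ := opnorm_bound D
  refine ⟨max t₀ 1, le_max_right _ _, fun x => ?_⟩
  have e1 : star x ⬝ᵥ Z *ᵥ x = star (hZ.sqrt *ᵥ x) ⬝ᵥ (hZ.sqrt *ᵥ x) := by
    have := dot_sq hZ.sqrt hZ.posSemidef_sqrt.1 x
    rwa [hZ.sqrt_mul_self] at this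
  have e2 : star x ⬝ᵥ X *ᵥ x = star (hX.sqrt *ᵥ x) ⬝ᵥ (hX.sqrt *ᵥ x) := by
    have := dot_sq hX.sqrt hX.posSemidef_sqrt.1 x
    rwa [hX.sqrt_mul_self] at this
  have hDx : hZ.sqrt *ᵥ x = D (hX.sqrt *ᵥ x) := by
    have := hD x
    simp only [Matrix.toLin'_apply] at this
    exact this.symm
  rw [e1, e2, hDx]
  calc star (D (hX.sqrt *ᵥ x)) ⬝ᵥ D (hX.sqrt *ᵥ x)
      ≤ (t₀ : ℂ) * (star (hX.sqrt *ᵥ x) ⬝ᵥ (hX.sqrt *ᵥ x)) := hDb _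
    _ ≤ ((max t₀ 1 : ℝ) : ℂ) * (star (hX.sqrt *ᵥ x) ⬝ᵥ (hX.sqrt *ᵥ x)) :=
        mul_le_mul_of_nonneg_right (by exact_mod_cast le_max_left t₀ 1)
          (dotProduct_star_self_nonneg _)

end ExtremalAux

open ExtremalAux Matrix

/-- Theorem 1 (minimal support characterization of extremality): let `C` be the convex
set of positive semidefinite operators satisfying affine trace constraints
`Tr[T_k Ξ] = c_k` and commuting with a fixed family of unitaries.  Then `Ξ ∈ C` is an
extreme point of `C` iff every `ζ ∈ C` with `supp ζ ⊆ supp Ξ` equals `Ξ`. -/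
theorem extremal_povm_stmt3 {n K L : ℕ}
    (T : Fin K → Matrix (Fin n) (Fin n) ℂ) (c : Fin K → ℂ)
    (U : Fin L → Matrix (Fin n) (Fin n) ℂ)
    (hU : ∀ l, U l ∈ Matrix.unitaryGroup (Fin n) ℂ)
    (C : Set (Matrix (Fin n) (Fin n) ℂ))
    (hC : C = {Ξ | Ξ.PosSemidef ∧ (∀ k, (T k * Ξ).trace = c k) ∧ ∀ l, Ξ * U l = U l * Ξ})
    (Ξ : Matrix (Fin n) (Fin n) ℂ) (hΞ : Ξ ∈ C) :
    Ξ ∈ C.extremePoints ℝ ↔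
      ∀ ζ ∈ C, LinearMap.range (Matrix.toLin' ζ) ≤ LinearMap.range (Matrix.toLin' Ξ) →
        ζ = Ξ := by
  subst hC
  obtain ⟨hΞpsd, hΞtr, hΞcom⟩ := hΞ
  constructor
  · rintro ⟨-, hext⟩ ζ hζmem hrange
    obtain ⟨hζpsd, hζtr, hζcom⟩ := hζmem
    -- kernel inclusion from range inclusion
    have hker : ∀ x, Ξ *ᵥ x = 0 → ζ *ᵥ x = 0 := by
      intro x hx
      obtain ⟨y, hy⟩ := hrange (LinearMap.mem_range_self (Matrix.toLin' ζ) x)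
      rw [Matrix.toLin'_apply, Matrix.toLin'_apply] at hy
      rw [← hζpsd.dotProduct_mulVec_zero_iff, ← hy, Matrix.dotProduct_mulVec,
        ← hΞpsd.1.eq, ← Matrix.star_mulVec, hx]
      simp
    obtain ⟨t, ht1, hdom⟩ := exists_dominate hζpsd hΞpsd hker
    have ht0 : (0:ℝ) < t := lt_of_lt_of_le one_pos ht1
    set s : ℝ := t⁻¹ with hs
    have hs0 : (0:ℝ) < s := inv_pos.2 ht0
    have hs1 : s ≤ 1 := by
      rw [hs]
      exact inv_le_one_of_one_le₀ ht1
    have hst : s * t = 1 := inv_mul_cancel₀ (ne_of_gt ht0)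
    set Ξ₁ := Ξ + (s:ℂ) • (Ξ - ζ) with hΞ₁
    set Ξ₂ := Ξ - (s:ℂ) • (Ξ - ζ) with hΞ₂
    -- quadratic forms
    have hq1 : ∀ x, star x ⬝ᵥ Ξ₁ *ᵥ x
        = (star x ⬝ᵥ Ξ *ᵥ x) + (s:ℂ) * (star x ⬝ᵥ Ξ *ᵥ x) - (s:ℂ) * (star x ⬝ᵥ ζ *ᵥ x) := by
      intro x
      simp only [hΞ₁, Matrix.add_mulVec, Matrix.sub_mulVec, Matrix.smul_mulVec,
        dotProduct_add, dotProduct_sub, dotProduct_smul, smul_eq_mul]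
      ring
    have hq2 : ∀ x, star x ⬝ᵥ Ξ₂ *ᵥ x
        = (star x ⬝ᵥ Ξ *ᵥ x) - (s:ℂ) * (star x ⬝ᵥ Ξ *ᵥ x) + (s:ℂ) * (star x ⬝ᵥ ζ *ᵥ x) := by
      intro x
      simp only [hΞ₂, Matrix.add_mulVec, Matrix.sub_mulVec, Matrix.smul_mulVec,
        dotProduct_add, dotProduct_sub, dotProduct_smul, smul_eq_mul]
      ring
    have hherm1 : Ξ₁.IsHermitian := by
      simp only [hΞ₁, Matrix.IsHermitian, conjTranspose_add, conjTranspose_smul,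
        conjTranspose_sub, hΞpsd.1.eq, hζpsd.1.eq, Complex.star_def, Complex.conj_ofReal]
    have hherm2 : Ξ₂.IsHermitian := by
      simp only [hΞ₂, Matrix.IsHermitian, conjTranspose_sub, conjTranspose_smul,
        hΞpsd.1.eq, hζpsd.1.eq, Complex.star_def, Complex.conj_ofReal]
    have hpsd1 : Ξ₁.PosSemidef := by
      refine PosSemidef.of_dotProduct_mulVec_nonneg hherm1 (fun x => ?_)
      rw [hq1 x]
      have h1 : (s:ℂ) * (star x ⬝ᵥ ζ *ᵥ x) ≤ (s:ℂ) * ((t:ℂ) * (star x ⬝ᵥ Ξ *ᵥ x)) :=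
        mul_le_mul_of_nonneg_left (hdom x) (by exact_mod_cast le_of_lt hs0)
      have h2 : (s:ℂ) * ((t:ℂ) * (star x ⬝ᵥ Ξ *ᵥ x)) = star x ⬝ᵥ Ξ *ᵥ x := by
        rw [← mul_assoc, ← Complex.ofReal_mul, hst]
        simp
      have h3 : (s:ℂ) * (star x ⬝ᵥ ζ *ᵥ x) ≤ star x ⬝ᵥ Ξ *ᵥ x := h2 ▸ h1
      have h4 : (0:ℂ) ≤ (s:ℂ) * (star x ⬝ᵥ Ξ *ᵥ x) :=
        mul_nonneg (by exact_mod_cast le_of_lt hs0) (hΞpsd.dotProduct_mulVec_nonneg x)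
      have hrearr : (star x ⬝ᵥ Ξ *ᵥ x) + (s:ℂ) * (star x ⬝ᵥ Ξ *ᵥ x)
            - (s:ℂ) * (star x ⬝ᵥ ζ *ᵥ x)
          = ((star x ⬝ᵥ Ξ *ᵥ x) - (s:ℂ) * (star x ⬝ᵥ ζ *ᵥ x))
            + (s:ℂ) * (star x ⬝ᵥ Ξ *ᵥ x) := by ring
      rw [hrearr]
      exact add_nonneg (sub_nonneg.2 h3) h4
    have hpsd2 : Ξ₂.PosSemidef := by
      refine PosSemidef.of_dotProduct_mulVec_nonneg hherm2 (fun x => ?_)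
      rw [hq2 x]
      have h4 : (0:ℂ) ≤ (s:ℂ) * (star x ⬝ᵥ ζ *ᵥ x) :=
        mul_nonneg (by exact_mod_cast le_of_lt hs0) (hζpsd.dotProduct_mulVec_nonneg x)
      have h5 : (0:ℂ) ≤ (1 - (s:ℂ)) * (star x ⬝ᵥ Ξ *ᵥ x) := by
        apply mul_nonneg _ (hΞpsd.dotProduct_mulVec_nonneg x)
        rw [sub_nonneg]
        exact_mod_cast hs1
      have hrearr : (star x ⬝ᵥ Ξ *ᵥ x) - (s:ℂ) * (star x ⬝ᵥ Ξ *ᵥ x)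
            + (s:ℂ) * (star x ⬝ᵥ ζ *ᵥ x)
          = (1 - (s:ℂ)) * (star x ⬝ᵥ Ξ *ᵥ x) + (s:ℂ) * (star x ⬝ᵥ ζ *ᵥ x) := by ring
      rw [hrearr]
      exact add_nonneg h5 h4
    have hmem1 : Ξ₁ ∈ {Ξ | Ξ.PosSemidef ∧ (∀ k, (T k * Ξ).trace = c k) ∧ ∀ l, Ξ * U l = U l * Ξ} := by
      refine ⟨hpsd1, fun k => ?_, fun l => ?_⟩
      · simp only [hΞ₁, Matrix.mul_add, Matrix.mul_sub, Matrix.mul_smul, Matrix.trace_add,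
          Matrix.trace_sub, Matrix.trace_smul, hΞtr k, hζtr k, smul_eq_mul]
        ring
      · simp only [hΞ₁, Matrix.add_mul, Matrix.mul_add, Matrix.sub_mul, Matrix.mul_sub,
          smul_mul_assoc, mul_smul_comm, hΞcom l, hζcom l]
    have hmem2 : Ξ₂ ∈ {Ξ | Ξ.PosSemidef ∧ (∀ k, (T k * Ξ).trace = c k) ∧ ∀ l, Ξ * U l = U l * Ξ} := by
      refine ⟨hpsd2, fun k => ?_, fun l => ?_⟩
      · simp only [hΞ₂, Matrix.mul_add, Matrix.mul_sub, Matrix.mul_smul, Matrix.trace_add,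
          Matrix.trace_sub, Matrix.trace_smul, hΞtr k, hζtr k, smul_eq_mul]
        ring
      · simp only [hΞ₂, Matrix.add_mul, Matrix.mul_add, Matrix.sub_mul, Matrix.mul_sub,
          smul_mul_assoc, mul_smul_comm, hΞcom l, hζcom l]
    have hseg : Ξ ∈ openSegment ℝ Ξ₁ Ξ₂ := by
      refine ⟨1/2, 1/2, by norm_num, by norm_num, by norm_num, ?_⟩
      rw [real_smul_matrix, real_smul_matrix, hΞ₁, hΞ₂]
      push_cast
      module
    have h2 := hext hmem2 hmem1 (by rw [openSegment_symm]; exact hseg)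
    -- Ξ₂ = Ξ gives ζ = Ξ
    rw [hΞ₂, sub_eq_self, smul_eq_zero] at h2
    rcases h2 with h2 | h2
    · exfalso
      have : (s:ℂ) ≠ 0 := by exact_mod_cast ne_of_gt hs0
      exact this h2
    · rw [sub_eq_zero] at h2
      exact h2.symm
  · intro hmin
    refine ⟨⟨hΞpsd, hΞtr, hΞcom⟩, ?_⟩
    rintro x₁ hx₁ x₂ hx₂ ⟨a, b, ha, hb, hab, hsum⟩
    rw [real_smul_matrix, real_smul_matrix] at hsum
    have hquad : ∀ x, (a:ℂ) * (star x ⬝ᵥ x₁ *ᵥ x) + (b:ℂ) * (star x ⬝ᵥ x₂ *ᵥ x)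
        = star x ⬝ᵥ Ξ *ᵥ x := by
      intro x
      rw [← hsum]
      simp only [Matrix.add_mulVec, Matrix.smul_mulVec, dotProduct_add,
        dotProduct_smul, smul_eq_mul]
    have hk : ∀ (W : Matrix (Fin n) (Fin n) ℂ), W.PosSemidef →
        (∀ x, Ξ *ᵥ x = 0 → W *ᵥ x = 0) →
        LinearMap.range (Matrix.toLin' W) ≤ LinearMap.range (Matrix.toLin' Ξ) :=
      fun W hW h => range_le_of_ker_le hΞpsd.1 hW.1 h
    have hker : ∀ x, Ξ *ᵥ x = 0 → (x₁ *ᵥ x = 0 ∧ x₂ *ᵥ x = 0) := by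
      intro x hx
      have h0 : (a:ℂ) * (star x ⬝ᵥ x₁ *ᵥ x) + (b:ℂ) * (star x ⬝ᵥ x₂ *ᵥ x) = 0 := by
        rw [hquad x, hx, dotProduct_zero]
      have hna : (0:ℂ) ≤ (a:ℂ) * (star x ⬝ᵥ x₁ *ᵥ x) :=
        mul_nonneg (by exact_mod_cast le_of_lt ha) (hx₁.1.dotProduct_mulVec_nonneg x)
      have hnb : (0:ℂ) ≤ (b:ℂ) * (star x ⬝ᵥ x₂ *ᵥ x) :=
        mul_nonneg (by exact_mod_cast le_of_lt hb) (hx₂.1.dotProduct_mulVec_nonneg x)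
      obtain ⟨hza, hzb⟩ := (add_eq_zero_iff_of_nonneg hna hnb).1 h0
      have ha' : (a:ℂ) ≠ 0 := by exact_mod_cast ne_of_gt ha
      have hb' : (b:ℂ) ≠ 0 := by exact_mod_cast ne_of_gt hb
      constructor
      · exact (hx₁.1.dotProduct_mulVec_zero_iff x).1 ((mul_eq_zero.1 hza).resolve_left ha')
      · exact (hx₂.1.dotProduct_mulVec_zero_iff x).1 ((mul_eq_zero.1 hzb).resolve_left hb')
    exact hmin x₁ hx₁ (hk x₁ hx₁.1 (fun x hx => (hker x hx).1))
end

section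
/- Let Ξ be a positive semidefinite operator on H = ⊕_{μ} ⊕_{i=1}^{m_μ} H_i^{(μ)} satisfying Tr[T_{ij}^{(μ)} Ξ] = d_μ δ_{ij} for all μ and all i, j, where T_{ij}^{(μ)} are the canonical isomorphisms between the equivalent subspaces H_j^{(μ)} and H_i^{(μ)} of dimension d_μ. Then rank(Ξ) ≥ max_μ (m_μ / d_μ). -/
open scoped ComplexOrder Matrix

/-- The index set of `H = ⊕_{μ} ⊕_{i=1}^{m μ} H_i^{(μ)}`, each `H_i^{(μ)}` of
dimension `d μ`, with orthonormal basis vectors `|(μ,i),n⟩`. -/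
abbrev PovmIdx {M : ℕ} (m d : Fin M → ℕ) : Type := (μ : Fin M) × (Fin (m μ) × Fin (d μ))

/-- The canonical intertwiner `T_{ij}^{(μ)} = Σ_n |(μ,i),n⟩⟨(μ,j),n|`. -/
noncomputable def povmT {M : ℕ} (m d : Fin M → ℕ) (μ : Fin M) (i j : Fin (m μ)) :
    Matrix (PovmIdx m d) (PovmIdx m d) ℂ :=
  ∑ n : Fin (d μ), Matrix.single (⟨μ, i, n⟩ : PovmIdx m d) ⟨μ, j, n⟩ 1

lemma trace_stdBasisMatrix_mul {n : Type*} [Fintype n] [DecidableEq n]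
    (a b : n) (A : Matrix n n ℂ) :
    (Matrix.single a b 1 * A).trace = A b a := by
  simp [Matrix.trace, Matrix.diag, Matrix.mul_apply, Matrix.single,
    ite_and, Finset.sum_ite_eq]

/-- Rank lower bound: if `Ξ ≥ 0` satisfies `Tr[T_{ij}^{(μ)} Ξ] = d_μ δ_{ij}`, then
`rank Ξ ≥ m_μ / d_μ` for every `μ`, i.e. `rank Ξ ≥ max_μ (m_μ/d_μ)`. -/
theorem extremal_povm_stmt7 {M : ℕ} (m d : Fin M → ℕ) (hd : ∀ μ, 0 < d μ)
    (Ξ : Matrix (PovmIdx m d) (PovmIdx m d) ℂ) (hΞ : Ξ.PosSemidef)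
    (hnorm : ∀ (μ : Fin M) (i j : Fin (m μ)),
      (povmT m d μ i j * Ξ).trace = if i = j then (d μ : ℂ) else 0) :
    ∀ μ : Fin M, (m μ : ℝ) / (d μ : ℝ) ≤ (Ξ.rank : ℝ) := by
  classical
  intro μ
  -- entrywise form of the normalization
  have key : ∀ i j : Fin (m μ),
      ∑ n : Fin (d μ), Ξ ⟨μ, j, n⟩ ⟨μ, i, n⟩ = if i = j then (d μ : ℂ) else 0 := by
    intro i j
    rw [← hnorm μ i j, povmT, Finset.sum_mul, Matrix.trace_sum]
    exact Finset.sum_congr rfl fun n _ => (trace_stdBasisMatrix_mul _ _ _).symm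
  open scoped MatrixOrder in
  set B := CFC.sqrt Ξ with hBdef
  open scoped MatrixOrder in
  have hBB : B * B = Ξ := CFC.sqrt_mul_sqrt_self Ξ hΞ.nonneg
  have hrank : B.rank = Ξ.rank := by
    have h1 : Ξ.rank = (Bᴴ * B).rank := by
      open scoped MatrixOrder in
      rw [(Matrix.nonneg_iff_posSemidef.mp (CFC.sqrt_nonneg Ξ)).isHermitian, hBB]
    rw [h1, Matrix.rank_conjTranspose_mul_self]
  set V := LinearMap.range B.mulVecLin with hV
  set J : Fin (d μ) → ((Fin (m μ) → ℂ) →ₗ[ℂ] (PovmIdx m d → ℂ)) := fun n =>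
    ∑ i : Fin (m μ), (LinearMap.proj i).smulRight
      (Pi.single (⟨μ, i, n⟩ : PovmIdx m d) (1 : ℂ)) with hJ
  have hJapp : ∀ (n : Fin (d μ)) (a : Fin (m μ) → ℂ) (x : PovmIdx m d),
      (J n) a x = ∑ i : Fin (m μ), a i * (Pi.single (⟨μ, i, n⟩ : PovmIdx m d) (1 : ℂ) : PovmIdx m d → ℂ) x := by
    intro n a x
    simp [hJ]
  set L : (Fin (m μ) → ℂ) →ₗ[ℂ] (Fin (d μ) → V) :=
    LinearMap.pi fun n =>
      LinearMap.codRestrict V (B.mulVecLin.comp (J n))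
        (fun a => LinearMap.mem_range_self _ _) with hL
  have hinj : Function.Injective L := by
    rw [← LinearMap.ker_eq_bot, LinearMap.ker_eq_bot']
    intro a ha
    have hzero : ∀ n : Fin (d μ), B *ᵥ ((J n) a) = 0 := by
      intro n
      have := congrFun ha n
      have h2 := congrArg (Subtype.val) this
      simpa [hL, Matrix.mulVecLin_apply] using h2
    have hXiv : ∀ n : Fin (d μ), Ξ *ᵥ ((J n) a) = 0 := by
      intro n
      rw [← hBB, ← Matrix.mulVec_mulVec, hzero n, Matrix.mulVec_zero]
    funext j
    have hcalc : ∀ n : Fin (d μ),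
        (Ξ *ᵥ ((J n) a)) ⟨μ, j, n⟩ = ∑ i : Fin (m μ), a i * Ξ ⟨μ, j, n⟩ ⟨μ, i, n⟩ := by
      intro n
      simp only [Matrix.mulVec, dotProduct, hJapp, Finset.mul_sum]
      rw [Finset.sum_comm]
      refine Finset.sum_congr rfl fun i _ => ?_
      simp [Pi.single_apply, mul_ite, mul_comm, mul_left_comm]
    have hsum : (0 : ℂ) = ∑ n : Fin (d μ), (Ξ *ᵥ ((J n) a)) ⟨μ, j, n⟩ := by
      simp [hXiv]
    rw [Finset.sum_congr rfl (fun n _ => hcalc n), Finset.sum_comm] at hsum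
    have : (0 : ℂ) = a j * (d μ : ℂ) := by
      rw [hsum]
      rw [Finset.sum_congr rfl (fun i _ => by rw [← Finset.mul_sum, key i j])]
      simp
    have hdne : (d μ : ℂ) ≠ 0 := by
      exact_mod_cast Nat.cast_ne_zero.mpr (hd μ).ne'
    have haj : a j = 0 := by
      rcases mul_eq_zero.mp this.symm with h | h
      · exact h
      · exact absurd h hdne
    simp [haj]
  have hfin : m μ ≤ d μ * Ξ.rank := by
    have h1 : Module.finrank ℂ (Fin (m μ) → ℂ) ≤ Module.finrank ℂ (Fin (d μ) → V) :=
      LinearMap.finrank_le_finrank_of_injective hinj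
    have h2 : Module.finrank ℂ (Fin (m μ) → ℂ) = m μ := by
      simp [Module.finrank_pi]
    have h3 : Module.finrank ℂ (Fin (d μ) → V) = d μ * Ξ.rank := by
      rw [Module.finrank_pi_fintype]
      simp only [Finset.sum_const, Finset.card_univ, Fintype.card_fin, smul_eq_mul]
      rw [← hrank, Matrix.rank]
    rw [h2, h3] at h1
    exact h1
  rw [div_le_iff₀ (by exact_mod_cast hd μ)]
  calc (m μ : ℝ) ≤ (d μ * Ξ.rank : ℕ) := by exact_mod_cast hfin
    _ = (Ξ.rank : ℝ) * (d μ : ℝ) := by push_cast; ring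
end

section
/- Let Ξ₀ be an extreme point of the convex set C of positive semidefinite operators satisfying fixed trace constraints Tr[T_k Ξ] = c_k with each T_k invariant under conjugation by a compact group of unitaries {U_h}_{h∈H₀} that also leaves support(Ξ₀) invariant and leaves C invariant under conjugation. Then Ξ₀ commutes with every U_h, h ∈ H₀. (Proof via averaging: the Haar average ξ = ∫ U_h Ξ₀ U_h† dh lies in C, has support contained in support(Ξ₀), hence equals Ξ₀ by extremality.) -/
open scoped ComplexOrder Matrix

namespace ExtremalPovmAux

open Matrix Complex

variable {n : ℕ}

lemma dot_conj (W M : Matrix (Fin n) (Fin n) ℂ) (x : Fin n → ℂ) :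
    star x ⬝ᵥ ((W * M * Wᴴ) *ᵥ x)
      = star (Wᴴ *ᵥ x) ⬝ᵥ (M *ᵥ (Wᴴ *ᵥ x)) := by
  rw [star_mulVec, conjTranspose_conjTranspose, ← mulVec_mulVec, ← mulVec_mulVec,
    dotProduct_mulVec]

set_option maxHeartbeats 800000 in
/-- Key dominance lemma: if `A, B` are PSD and the range of `B` is contained in the
range of `A`, then `B ≤ c • A` for some `c > 0`. -/
lemma key {A B : Matrix (Fin n) (Fin n) ℂ} (hA : A.PosSemidef) (hB : B.PosSemidef)
    (hran : ∀ x : Fin n → ℂ, ∃ y, A *ᵥ y = B *ᵥ x) :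
    ∃ c : ℝ, 0 < c ∧ (c • A - B).PosSemidef := by
  classical
  have hHA := hA.1
  set W : Matrix (Fin n) (Fin n) ℂ := (hHA.eigenvectorUnitary : Matrix (Fin n) (Fin n) ℂ)
    with hWdef
  set ev : Fin n → ℝ := hHA.eigenvalues with hevdef
  set D : Matrix (Fin n) (Fin n) ℂ := diagonal (RCLike.ofReal ∘ ev) with hDdef
  have hWW : Wᴴ * W = 1 := hHA.eigenvectorUnitary.2.1
  have hWW' : W * Wᴴ = 1 := hHA.eigenvectorUnitary.2.2
  have spec : A = W * D * Wᴴ := hHA.spectral_theorem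
  have hevnn : ∀ i, 0 ≤ ev i := hA.eigenvalues_nonneg
  set B' : Matrix (Fin n) (Fin n) ℂ := Wᴴ * B * W with hB'def
  have hB' : B'.PosSemidef := hB.conjTranspose_mul_mul_same W
  have hBW : B = W * B' * Wᴴ := by
    rw [hB'def]
    calc B = (W * Wᴴ) * B * (W * Wᴴ) := by rw [hWW']; simp
    _ = W * (Wᴴ * B * W) * Wᴴ := by noncomm_ring
  -- rows with zero eigenvalue vanish
  have hrow : ∀ i, ev i = 0 → ∀ j, B' i j = 0 := by
    intro i hi j
    obtain ⟨y, hy⟩ := hran (W *ᵥ Pi.single j 1)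
    have h1 : B' *ᵥ Pi.single j 1 = D *ᵥ (Wᴴ *ᵥ y) := by
      rw [hB'def, ← mulVec_mulVec, ← mulVec_mulVec, ← hy, spec, ← mulVec_mulVec,
        ← mulVec_mulVec, mulVec_mulVec _ Wᴴ W, hWW, one_mulVec]
    have h2 := congrFun h1 i
    simp only [hDdef, mulVec_single, mul_one, mulVec_diagonal, Function.comp_apply, hi,
      RCLike.ofReal_zero, zero_mul] at h2
    simpa using h2
  have hcol : ∀ i j, ev j = 0 → B' i j = 0 := by
    intro i j hj
    have := congrFun (congrFun hB'.1 i) j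
    rw [conjTranspose_apply] at this
    rw [← this, hrow j hj i, star_zero]
  -- weights
  set r : Fin n → ℝ := fun i => (∑ j, (‖B' i j‖ + ‖B' j i‖)) / 2
    with hrdef
  have hrnn : ∀ i, 0 ≤ r i := fun i => by
    apply div_nonneg _ (by norm_num)
    exact Finset.sum_nonneg fun j _ => add_nonneg (norm_nonneg _) (norm_nonneg _)
  have hr0 : ∀ i, ev i = 0 → r i = 0 := by
    intro i hi
    simp only [hrdef]
    rw [div_eq_zero_iff]; left
    apply Finset.sum_eq_zero; intro j _
    rw [hrow i hi j, hcol j i hi]; simp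
  set t : ℝ := ∑ i, r i with htdef
  have hrt : ∀ i, r i ≤ t := fun i =>
    Finset.single_le_sum (fun j _ => hrnn j) (Finset.mem_univ i)
  set S : Finset (Fin n) := Finset.univ.filter (fun i => ev i ≠ 0) with hSdef
  set μ : ℝ := if hS : S.Nonempty then S.inf' hS ev else 1 with hμdef
  have hμpos : 0 < μ := by
    rw [hμdef]; split_ifs with hS
    · obtain ⟨i, hiS, hie⟩ := Finset.exists_mem_eq_inf' hS ev
      rw [hie]
      rcases (hevnn i).lt_or_eq with h | h
      · exact h
      · exact absurd h.symm (by simpa [hSdef] using hiS)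
    · norm_num
  have hμle : ∀ i, ev i ≠ 0 → μ ≤ ev i := by
    intro i hi
    have hiS : i ∈ S := by simp [hSdef, hi]
    rw [hμdef, dif_pos ⟨i, hiS⟩]
    exact Finset.inf'_le ev hiS
  set c : ℝ := (t + 1) / μ with hcdef
  have htnn : 0 ≤ t := Finset.sum_nonneg fun i _ => hrnn i
  have hcpos : 0 < c := div_pos (by linarith) hμpos
  have hterm : ∀ i (u : ℝ), 0 ≤ u → r i * u ≤ c * (ev i * u) := by
    intro i u hu
    rcases eq_or_ne (ev i) 0 with h | h
    · rw [hr0 i h, h]; simp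
    · have h1 : r i ≤ c * ev i := by
        have hcμ : c * μ = t + 1 := by rw [hcdef]; field_simp
        calc r i ≤ t := hrt i
        _ ≤ t + 1 := by linarith
        _ = c * μ := hcμ.symm
        _ ≤ c * ev i := mul_le_mul_of_nonneg_left (hμle i h) hcpos.le
      calc r i * u ≤ (c * ev i) * u := mul_le_mul_of_nonneg_right h1 hu
      _ = c * (ev i * u) := by ring
  refine ⟨c, hcpos, Matrix.PosSemidef.of_dotProduct_mulVec_nonneg ?_ ?_⟩
  · unfold Matrix.IsHermitian
    rw [conjTranspose_sub, conjTranspose_smul, star_trivial, hA.1.eq, hB.1.eq]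
  · intro x
    set y : Fin n → ℂ := Wᴴ *ᵥ x with hydef
    have hqA : star x ⬝ᵥ (A *ᵥ x) = star y ⬝ᵥ (D *ᵥ y) := by
      conv_lhs => rw [spec]
      exact dot_conj W D x
    have hqB : star x ⬝ᵥ (B *ᵥ x) = star y ⬝ᵥ (B' *ᵥ y) := by
      conv_lhs => rw [hBW]
      exact dot_conj W B' x
    have reA : star y ⬝ᵥ (D *ᵥ y) = ((∑ i, ev i * normSq (y i) : ℝ) : ℂ) := by
      rw [dotProduct]
      push_cast
      apply Finset.sum_congr rfl
      intro i _
      simp only [hDdef, mulVec_diagonal, Function.comp_apply, Pi.star_apply,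
        RCLike.star_def, RCLike.ofReal_real_eq_id, id_eq]
      rw [mul_comm ((starRingEnd ℂ) (y i)) _, mul_assoc, Complex.mul_conj]
      rfl
    have hBexp : star y ⬝ᵥ (B' *ᵥ y) = ∑ i, ∑ j, star (y i) * B' i j * y j := by
      simp only [dotProduct, mulVec, Finset.mul_sum, Pi.star_apply, mul_assoc]
    have hre1 : (star y ⬝ᵥ (B' *ᵥ y)).re ≤ ∑ i, r i * normSq (y i) := by
      rw [hBexp]
      calc (∑ i, ∑ j, star (y i) * B' i j * y j).re
          = ∑ i, ∑ j, (star (y i) * B' i j * y j).re := by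
            rw [Complex.re_sum]
            exact Finset.sum_congr rfl fun i _ => Complex.re_sum _ _
        _ ≤ ∑ i, ∑ j, ‖B' i j‖ * (‖y i‖ * ‖y j‖) := by
            refine Finset.sum_le_sum fun i _ => Finset.sum_le_sum fun j _ => ?_
            refine (Complex.re_le_norm _).trans ?_
            rw [norm_mul, norm_mul, RCLike.star_def, Complex.norm_conj]
            exact le_of_eq (by ring)
        _ ≤ ∑ i, ∑ j, ‖B' i j‖ * ((normSq (y i) + normSq (y j)) / 2) := by
            refine Finset.sum_le_sum fun i _ => Finset.sum_le_sum fun j _ => ?_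
            refine mul_le_mul_of_nonneg_left ?_ (norm_nonneg _)
            rw [← Complex.sq_norm, ← Complex.sq_norm]
            nlinarith [norm_nonneg (y i), norm_nonneg (y j),
              sq_nonneg (‖y i‖ - ‖y j‖)]
        _ = (∑ i, ∑ j, ‖B' i j‖ * normSq (y i) / 2)
              + ∑ i, ∑ j, ‖B' i j‖ * normSq (y j) / 2 := by
            rw [← Finset.sum_add_distrib]
            refine Finset.sum_congr rfl fun i _ => ?_
            rw [← Finset.sum_add_distrib]
            exact Finset.sum_congr rfl fun j _ => by ring
        _ = (∑ i, ∑ j, ‖B' i j‖ * normSq (y i) / 2)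
              + ∑ i, ∑ j, ‖B' j i‖ * normSq (y i) / 2 := by
            congr 1
            rw [Finset.sum_comm]
        _ = ∑ i, r i * normSq (y i) := by
            rw [← Finset.sum_add_distrib]
            refine Finset.sum_congr rfl fun i _ => ?_
            rw [← Finset.sum_add_distrib]
            simp only [hrdef]
            rw [div_mul_eq_mul_div, Finset.sum_mul, Finset.sum_div]
            exact Finset.sum_congr rfl fun j _ => by ring
    have hre2 : ∑ i, r i * normSq (y i) ≤ c * ∑ i, ev i * normSq (y i) := by
      rw [Finset.mul_sum]
      exact Finset.sum_le_sum fun i _ => hterm i _ (normSq_nonneg _)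
    have himB : (star x ⬝ᵥ (B *ᵥ x)).im = 0 := by
      have h0 := hB.dotProduct_mulVec_nonneg x
      rw [Complex.le_def] at h0
      exact h0.2.symm
    have hBr : star x ⬝ᵥ (B *ᵥ x) = (((star x ⬝ᵥ (B *ᵥ x)).re : ℝ) : ℂ) := by
      apply Complex.ext <;> simp [himB]
    have hexp : star x ⬝ᵥ ((c • A - B) *ᵥ x)
        = ((c * ∑ i, ev i * normSq (y i) - (star x ⬝ᵥ (B *ᵥ x)).re : ℝ) : ℂ) := by
      rw [sub_mulVec, dotProduct_sub, smul_mulVec, dotProduct_smul]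
      rw [hqA, reA]
      conv_lhs => rw [hBr]
      push_cast
      rw [Complex.real_smul]
    rw [hexp]
    rw [← Complex.ofReal_zero, Complex.real_le_real]
    have : (star x ⬝ᵥ (B *ᵥ x)).re ≤ c * ∑ i, ev i * normSq (y i) := by
      rw [hqB]
      exact hre1.trans hre2
    linarith

end ExtremalPovmAux

/-- Averaging argument: an extreme point `Ξ₀` of the convex set `C` of PSD operators
satisfying trace constraints `Tr[T_k Ξ] = c_k`, with the `T_k` invariant under
conjugation by a (finite) unitary representation `U` of a group `G₀` which also leaves
the support of `Ξ₀` invariant, commutes with every `U_h`. -/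
theorem extremal_povm_stmt12 {n K : ℕ} {G : Type*} [Group G] [Fintype G]
    (U : G →* Matrix.unitaryGroup (Fin n) ℂ)
    (T : Fin K → Matrix (Fin n) (Fin n) ℂ) (c : Fin K → ℂ)
    (hTinv : ∀ (h : G) (k : Fin K),
      (U h : Matrix (Fin n) (Fin n) ℂ) * T k * star (U h : Matrix (Fin n) (Fin n) ℂ)
        = T k)
    (C : Set (Matrix (Fin n) (Fin n) ℂ))
    (hC : C = {Ξ | Ξ.PosSemidef ∧ ∀ k, (T k * Ξ).trace = c k})
    (Ξ₀ : Matrix (Fin n) (Fin n) ℂ) (hΞ₀ : Ξ₀ ∈ C)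
    (hext : Ξ₀ ∈ C.extremePoints ℝ)
    (hsupp : ∀ h : G,
      LinearMap.range (Matrix.toLin'
        ((U h : Matrix (Fin n) (Fin n) ℂ) * Ξ₀ * star (U h : Matrix (Fin n) (Fin n) ℂ)))
        = LinearMap.range (Matrix.toLin' Ξ₀)) :
    ∀ h : G, Ξ₀ * (U h : Matrix (Fin n) (Fin n) ℂ)
      = (U h : Matrix (Fin n) (Fin n) ℂ) * Ξ₀ := by
  intro h
  set V : Matrix (Fin n) (Fin n) ℂ := (U h : Matrix (Fin n) (Fin n) ℂ) with hVdef
  have hVV : star V * V = 1 := (U h).2.1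
  have hVV' : V * star V = 1 := (U h).2.2
  rw [hC] at hΞ₀
  obtain ⟨hΞ₀psd, hΞ₀tr⟩ := hΞ₀
  set Ξ₁ : Matrix (Fin n) (Fin n) ℂ := V * Ξ₀ * star V with hΞ₁def
  have hΞ₁psd : Ξ₁.PosSemidef := by
    rw [hΞ₁def, Matrix.star_eq_conjTranspose]
    exact hΞ₀psd.mul_mul_conjTranspose_same V
  have hcomm : ∀ k, T k * V = V * T k := by
    intro k
    have := hTinv h k
    calc T k * V = (V * T k * star V) * V := by rw [this]
    _ = V * T k * (star V * V) := by noncomm_ring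
    _ = V * T k := by rw [hVV, mul_one]
  have hΞ₁tr : ∀ k, (T k * Ξ₁).trace = c k := by
    intro k
    have : T k * Ξ₁ = V * (T k * Ξ₀ * star V) := by
      rw [hΞ₁def, ← mul_assoc, ← mul_assoc, hcomm k, mul_assoc, mul_assoc, mul_assoc]
    rw [this, Matrix.trace_mul_comm, mul_assoc, hVV, mul_one, hΞ₀tr k]
  have hΞ₁C : Ξ₁ ∈ C := by rw [hC]; exact ⟨hΞ₁psd, hΞ₁tr⟩
  -- the range condition
  have hran : ∀ x : Fin n → ℂ, ∃ y, Ξ₀ *ᵥ y = Ξ₁ *ᵥ x := by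
    intro x
    have hx : Matrix.toLin' Ξ₁ x ∈ LinearMap.range (Matrix.toLin' Ξ₁) :=
      LinearMap.mem_range_self _ x
    rw [hΞ₁def, hsupp h] at hx
    obtain ⟨y, hy⟩ := hx
    refine ⟨y, ?_⟩
    simp only [Matrix.toLin'_apply] at hy
    rw [hy, hΞ₁def, ← Matrix.mulVec_mulVec, ← Matrix.mulVec_mulVec, Matrix.mulVec_mulVec]
  obtain ⟨cc, hccpos, hpsd⟩ := ExtremalPovmAux.key hΞ₀psd hΞ₁psd hran
  -- second endpoint
  set Ξ₂ : Matrix (Fin n) (Fin n) ℂ := cc⁻¹ • ((cc • Ξ₀ - Ξ₁) + Ξ₀) with hΞ₂def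
  have hΞ₂psd : Ξ₂.PosSemidef := by
    rw [hΞ₂def]
    have h1 : ((cc • Ξ₀ - Ξ₁) + Ξ₀).PosSemidef := hpsd.add hΞ₀psd
    refine Matrix.PosSemidef.of_dotProduct_mulVec_nonneg ?_ ?_
    · unfold Matrix.IsHermitian
      rw [Matrix.conjTranspose_smul, star_trivial, h1.1.eq]
    · intro x
      rw [Matrix.smul_mulVec, dotProduct_smul]
      have h2 := h1.dotProduct_mulVec_nonneg x
      have : (0:ℂ) ≤ (cc⁻¹ : ℝ) • (star x ⬝ᵥ ((cc • Ξ₀ - Ξ₁) + Ξ₀) *ᵥ x) := by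
        rw [Complex.real_smul]
        exact mul_nonneg (by positivity) h2
      simpa using this
  have hΞ₂tr : ∀ k, (T k * Ξ₂).trace = c k := by
    intro k
    rw [hΞ₂def]
    rw [Matrix.mul_smul, Matrix.trace_smul]
    rw [mul_add, mul_sub, Matrix.mul_smul]
    rw [Matrix.trace_add, Matrix.trace_sub, Matrix.trace_smul]
    rw [hΞ₀tr k, hΞ₁tr k]
    rw [Complex.real_smul, Complex.real_smul]
    have hcc : (cc : ℂ) ≠ 0 := by exact_mod_cast hccpos.ne'
    field_simp
    push_cast
    field_simp
    ring
  have hΞ₂C : Ξ₂ ∈ C := by rw [hC]; exact ⟨hΞ₂psd, hΞ₂tr⟩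
  -- Ξ₀ is in the open segment between Ξ₁ and Ξ₂
  have hseg : Ξ₀ ∈ openSegment ℝ Ξ₁ Ξ₂ := by
    refine ⟨1 / (cc + 1), cc / (cc + 1), by positivity, by positivity, ?_, ?_⟩
    · field_simp
      ring
    · rw [hΞ₂def]
      rw [smul_smul]
      have h1 : cc / (cc + 1) * cc⁻¹ = 1 / (cc + 1) := by
        field_simp
      rw [h1]
      rw [smul_add, smul_sub, smul_smul]
      have h2 : (1 : ℝ) / (cc + 1) * cc = cc / (cc + 1) := by ring
      rw [h2]
      match_scalars <;> field_simp <;> ring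
  have := hext.2 hΞ₁C hΞ₂C hseg
  -- this : Ξ₁ = Ξ₀
  have hfix : V * Ξ₀ * star V = Ξ₀ := this
  calc Ξ₀ * V = (V * Ξ₀ * star V) * V := by rw [hfix]
  _ = V * Ξ₀ * (star V * V) := by noncomm_ring
  _ = V * Ξ₀ := by rw [hVV, mul_one]
end
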